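/- In a rotationally asymmetric configuration of distinct points on a circle, if a point r is a confused leader (i.e., r is the true leader in exactly one of the two configurations C_0(r) — antipodal position of r empty — and C_1(r) — antipodal position occupied), then r is the true leader in C_0(r) and not in C_1(r). -/

import Mathlib

open scoped symmDiff


open Real

/-- Normalize a real number into `[0, 2π)` (representing an angle on the circle). -/
noncomputable def norm2pi (x : ℝ) : ℝ := (2 * π) * Int.fract (x / (2 * π))

/-- Clockwise angular distance from `a` to `b`, in `[0, 2π)`. -/
noncomputable def cwAngle (a b : ℝ) : ℝ := norm2pi (b - a)

/-- A configuration: a finite set of angles, all lying in `[0, 2π)`. -/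
def OnCircle (s : Finset ℝ) : Prop := ∀ x ∈ s, 0 ≤ x ∧ x < 2 * π

/-- Rotation of a configuration by angle `θ`. -/
noncomputable def rotConf (s : Finset ℝ) (θ : ℝ) : Finset ℝ :=
  s.image (fun x => norm2pi (x + θ))

/-- Rotational asymmetry: no nontrivial rotation preserves the configuration. -/
def RotAsym (s : Finset ℝ) : Prop := ∀ θ ∈ Set.Ioo 0 (2 * π), rotConf s θ ≠ s

/-- The clockwise gap (angle) sequence of the point `r` in configuration `s`:
consecutive clockwise angular gaps starting at `r`. -/
noncomputable def angleSeq (s : Finset ℝ) (r : ℝ) : List ℝ :=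
  let l := ((s.erase r).image (fun x => cwAngle r x)).sort (· ≤ ·)
  List.zipWith (fun u v => u - v) (l ++ [2 * π]) (0 :: l)

/-- Strict lexicographic order on lists of reals. -/
def ListLexLt (l₁ l₂ : List ℝ) : Prop := List.Lex (· < ·) l₁ l₂

/-- `r` is the true leader of `s`: its angle sequence is lexicographically strictly
smaller than that of every other point. -/
def IsTrueLeader (s : Finset ℝ) (r : ℝ) : Prop :=
  r ∈ s ∧ ∀ x ∈ s, x ≠ r → ListLexLt (angleSeq s r) (angleSeq s x)

/-- The antipodal position of a point `r`. -/
noncomputable def antip (r : ℝ) : ℝ := norm2pi (r + π)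

/-- The configuration as seen from `r` assuming its antipodal position is empty. -/
noncomputable def confC0 (s : Finset ℝ) (r : ℝ) : Finset ℝ := s.erase (antip r)

/-- The configuration as seen from `r` assuming its antipodal position is occupied. -/
noncomputable def confC1 (s : Finset ℝ) (r : ℝ) : Finset ℝ := insert (antip r) s

/-- A confused leader: both possibilities `C₀(r)` and `C₁(r)` are rotationally
asymmetric, and `r` is the true leader in exactly one of them. -/
def ConfusedLeader (s : Finset ℝ) (r : ℝ) : Prop :=
  r ∈ s ∧ RotAsym (confC0 s r) ∧ RotAsym (confC1 s r) ∧
    Xor' (IsTrueLeader (confC0 s r) r) (IsTrueLeader (confC1 s r) r)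

/-- A sure leader: `r` is the true leader in every possible (rotationally
asymmetric) configuration among `C₀(r)`, `C₁(r)`. -/
def SureLeader (s : Finset ℝ) (r : ℝ) : Prop :=
  r ∈ s ∧ (RotAsym (confC0 s r) → IsTrueLeader (confC0 s r) r) ∧
    (RotAsym (confC1 s r) → IsTrueLeader (confC1 s r) r)

/-- An expected leader is a sure leader or a confused leader. -/
def ExpectedLeader (s : Finset ℝ) (r : ℝ) : Prop := SureLeader s r ∨ ConfusedLeader s r

/-- `r'` is the first clockwise neighbor of `r` in `s`. -/
def IsCwNeighbor (s : Finset ℝ) (r r' : ℝ) : Prop :=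
  r' ∈ s ∧ r' ≠ r ∧ ∀ x ∈ s, x ≠ r → cwAngle r r' ≤ cwAngle r x

-- ===== auxiliary machinery =====
lemma tpp : (0:ℝ) < 2 * π := by positivity

lemma norm2pi_nonneg (x : ℝ) : 0 ≤ norm2pi x :=
  mul_nonneg (le_of_lt tpp) (Int.fract_nonneg _)

lemma norm2pi_lt (x : ℝ) : norm2pi x < 2 * π := by
  have := Int.fract_lt_one (x / (2*π))
  calc norm2pi x < (2*π) * 1 := mul_lt_mul_of_pos_left this tpp
    _ = 2*π := mul_one _

lemma norm2pi_eq_self {x : ℝ} (h0 : 0 ≤ x) (h1 : x < 2*π) : norm2pi x = x := by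
  unfold norm2pi
  rw [Int.fract_eq_self.mpr ⟨by positivity, by
    rw [div_lt_one tpp]; exact h1⟩]
  field_simp

/-- norm2pi x differs from x by an integer multiple of 2π -/
lemma norm2pi_sub_eq (x : ℝ) : ∃ k : ℤ, norm2pi x = x - 2*π*k := by
  refine ⟨⌊x/(2*π)⌋, ?_⟩
  unfold norm2pi Int.fract
  have h : (x/(2*π) - ⌊x/(2*π)⌋) * (2*π) = x - 2*π*⌊x/(2*π)⌋ := by
    field_simp
  linarith [h]

lemma norm2pi_add_int (x : ℝ) (k : ℤ) : norm2pi (x + 2*π*k) = norm2pi x := by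
  unfold norm2pi
  rw [show (x + 2*π*k)/(2*π) = x/(2*π) + k by field_simp]
  rw [Int.fract_add_intCast]

lemma norm2pi_norm2pi_add (a b : ℝ) : norm2pi (norm2pi a + b) = norm2pi (a + b) := by
  obtain ⟨k, hk⟩ := norm2pi_sub_eq a
  rw [hk, show a - 2*π*k + b = (a+b) + 2*π*(-k : ℤ) by push_cast; ring, norm2pi_add_int]

-- congruence: equal norm2pi iff differ by multiple of 2π
lemma norm2pi_eq_norm2pi {a b : ℝ} (h : ∃ k : ℤ, a - b = 2*π*k) : norm2pi a = norm2pi b := by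
  obtain ⟨k, hk⟩ := h
  have : a = b + 2*π*k := by linarith
  rw [this, norm2pi_add_int]

lemma eq_of_norm2pi_eq {a b : ℝ} (h : norm2pi a = norm2pi b) : ∃ k : ℤ, a - b = 2*π*k := by
  obtain ⟨k1, h1⟩ := norm2pi_sub_eq a
  obtain ⟨k2, h2⟩ := norm2pi_sub_eq b
  exact ⟨k1 - k2, by push_cast; linarith⟩

-- if |a - b| < 2π and a-b = 2πk then a = b... main use:
lemma int_mul_eq_zero {k : ℤ} (h : |2*π*(k:ℝ)| < 2*π) : (k:ℝ) = 0 := by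
  by_contra hk
  have h1 : (1:ℝ) ≤ |(k:ℝ)| := by
    have : k ≠ 0 := by exact_mod_cast hk
    exact_mod_cast Int.one_le_abs (by simpa using this)
  have : |2*π*(k:ℝ)| = 2*π*|(k:ℝ)| := by
    rw [abs_mul, abs_of_pos tpp]
  nlinarith [tpp]

lemma norm2pi_inj {a b : ℝ} (ha0 : 0 ≤ a) (ha1 : a < 2*π) (hb0 : 0 ≤ b) (hb1 : b < 2*π)
    (h : norm2pi a = norm2pi b) : a = b := by
  obtain ⟨k, hk⟩ := eq_of_norm2pi_eq h
  have : (k:ℝ) = 0 := int_mul_eq_zero (by rw [← hk]; rw [abs_lt]; constructor <;> linarith)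
  rw [this] at hk; linarith

lemma cwAngle_self_eq (a b : ℝ) : norm2pi (a + cwAngle a b) = norm2pi b := by
  unfold cwAngle
  rw [show a + norm2pi (b-a) = norm2pi (b-a) + a by ring, norm2pi_norm2pi_add]
  congr 1; ring

lemma cwAngle_pos {a b : ℝ} (ha0 : 0 ≤ a) (ha1 : a < 2*π) (hb0 : 0 ≤ b) (hb1 : b < 2*π)
    (hne : b ≠ a) : 0 < cwAngle a b := by
  rcases lt_or_eq_of_le (norm2pi_nonneg (b - a)) with h | h
  · exact h
  · exfalso
    have : norm2pi b = norm2pi a := by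
      have := cwAngle_self_eq a b
      unfold cwAngle at this
      rw [← h] at this
      simpa [norm2pi_eq_self ha0 ha1] using this.symm
    exact hne (norm2pi_inj hb0 hb1 ha0 ha1 this)


noncomputable def Dset (t : Finset ℝ) (a : ℝ) : Finset ℝ := (t.erase a).image (cwAngle a)

/-- occupancy characterization -/
lemma mem_Dset_iff {t : Finset ℝ} (ht : OnCircle t) {a θ : ℝ} (ha0 : 0 ≤ a) (ha1 : a < 2*π)
    (hθ0 : 0 < θ) (hθ1 : θ < 2*π) : θ ∈ Dset t a ↔ norm2pi (a + θ) ∈ t := by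
  constructor
  · rintro h
    obtain ⟨y, hy, rfl⟩ := Finset.mem_image.mp h
    rw [cwAngle_self_eq]
    rw [norm2pi_eq_self (ht y (Finset.mem_of_mem_erase hy)).1 (ht y (Finset.mem_of_mem_erase hy)).2]
    exact Finset.mem_of_mem_erase hy
  · intro h
    refine Finset.mem_image.mpr ⟨norm2pi (a+θ), Finset.mem_erase.mpr ⟨?_, h⟩, ?_⟩
    · intro he
      have : norm2pi (a + θ) = norm2pi (a + 0) := by
        rw [he]; rw [add_zero]; exact (norm2pi_eq_self ha0 ha1).symm
      obtain ⟨k, hk⟩ := eq_of_norm2pi_eq this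
      have hz : (k:ℝ) = 0 := int_mul_eq_zero (by rw [← hk]; rw [abs_lt]; constructor <;> linarith)
      rw [hz] at hk; simp at hk; linarith
    · unfold cwAngle
      rw [show norm2pi (a+θ) - a = norm2pi (a+θ) + (-a) by ring, norm2pi_norm2pi_add]
      rw [show a + θ + -a = θ by ring]
      exact norm2pi_eq_self (le_of_lt hθ0) hθ1

lemma Dset_pos {t : Finset ℝ} (ht : OnCircle t) {a θ : ℝ} (ha : a ∈ t) (h : θ ∈ Dset t a) :
    0 < θ ∧ θ < 2*π := by
  obtain ⟨y, hy, rfl⟩ := Finset.mem_image.mp h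
  obtain ⟨hy1, hy2⟩ := Finset.mem_erase.mp hy
  refine ⟨cwAngle_pos (ht a ha).1 (ht a ha).2 (ht y hy2).1 (ht y hy2).2 hy1, norm2pi_lt _⟩

/-- `a` beats `b` in config `t` -/
def Wins (t : Finset ℝ) (a b : ℝ) : Prop :=
  ∃ θ, θ ∈ Dset t a ∧ θ ∉ Dset t b ∧ ∀ ψ, ψ < θ → (ψ ∈ Dset t a ↔ ψ ∈ Dset t b)

lemma wins_asymm {t : Finset ℝ} {a b : ℝ} (h1 : Wins t a b) (h2 : Wins t b a) : False := by
  obtain ⟨θ, ha, hb, hag⟩ := h1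
  obtain ⟨θ', ha', hb', hag'⟩ := h2
  rcases lt_trichotomy θ θ' with h | h | h
  · exact hb ((hag' θ h).mpr ha)
  · exact hb' (h ▸ ha)
  · exact hb' ((hag θ' h).mpr ha')

lemma wins_trichotomy (t : Finset ℝ) (a b : ℝ) :
    Wins t a b ∨ Dset t a = Dset t b ∨ Wins t b a := by
  by_cases h : Dset t a = Dset t b
  · exact Or.inr (Or.inl h)
  · have hne : (Dset t a ∆ Dset t b).Nonempty := by
      rw [Finset.nonempty_iff_ne_empty]
      intro he
      exact h (Finset.symmDiff_eq_empty.mp he)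
    set θ := (Dset t a ∆ Dset t b).min' hne with hθ
    have hmem := (Dset t a ∆ Dset t b).min'_mem hne
    have hag : ∀ ψ, ψ < θ → (ψ ∈ Dset t a ↔ ψ ∈ Dset t b) := by
      intro ψ hψ
      by_contra hc
      have : ψ ∈ Dset t a ∆ Dset t b := by
        rw [Finset.mem_symmDiff]; tauto
      exact absurd (Finset.min'_le _ _ this) (not_le.mpr hψ)
    rw [Finset.mem_symmDiff] at hmem
    rcases hmem with ⟨h1, h2⟩ | ⟨h1, h2⟩
    · exact Or.inl ⟨θ, h1, h2, hag⟩
    · exact Or.inr (Or.inr ⟨θ, h1, h2, fun ψ hψ => (hag ψ hψ).symm⟩)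

/-- equal distance sets of distinct points give a rotational symmetry -/
lemma rot_of_Dset_eq {t : Finset ℝ} (ht : OnCircle t) {a b : ℝ} (ha : a ∈ t) (hb : b ∈ t)
    (hne : a ≠ b) (heq : Dset t a = Dset t b) : ¬ RotAsym t := by
  intro hasym
  set θ := cwAngle a b with hθ
  have hθ0 : 0 < θ := cwAngle_pos (ht a ha).1 (ht a ha).2 (ht b hb).1 (ht b hb).2 (Ne.symm hne)
  have hθ1 : θ < 2*π := norm2pi_lt _
  apply hasym θ ⟨hθ0, hθ1⟩
  have hsub : rotConf t θ ⊆ t := by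
    intro w hw
    obtain ⟨z, hz, rfl⟩ := Finset.mem_image.mp hw
    by_cases hza : z = a
    · subst hza
      rw [cwAngle_self_eq]
      rw [norm2pi_eq_self (ht b hb).1 (ht b hb).2]
      exact hb
    · set ψ := cwAngle a z with hψ
      have hψ0 : 0 < ψ := cwAngle_pos (ht a ha).1 (ht a ha).2 (ht z hz).1 (ht z hz).2 hza
      have hψ1 : ψ < 2*π := norm2pi_lt _
      have hmem : ψ ∈ Dset t a := Finset.mem_image.mpr ⟨z, Finset.mem_erase.mpr ⟨hza, hz⟩, rfl⟩
      rw [heq] at hmem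
      have := (mem_Dset_iff ht (ht b hb).1 (ht b hb).2 hψ0 hψ1).mp hmem
      have harith : norm2pi (z + θ) = norm2pi (b + ψ) := by
        apply norm2pi_eq_norm2pi
        -- z + θ - (b + ψ): θ = norm2pi (b - a), ψ = norm2pi (z - a)
        obtain ⟨k1, hk1⟩ : ∃ k : ℤ, θ - (b - a) = 2*π*k := by
          obtain ⟨k, hk⟩ := eq_of_norm2pi_eq (a := b - a) (b := θ)
            (by rw [norm2pi_eq_self (le_of_lt hθ0) hθ1, hθ]; rfl)
          exact ⟨-k, by push_cast; linarith⟩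
        obtain ⟨k2, hk2⟩ : ∃ k : ℤ, ψ - (z - a) = 2*π*k := by
          obtain ⟨k, hk⟩ := eq_of_norm2pi_eq (a := z - a) (b := ψ)
            (by rw [norm2pi_eq_self (le_of_lt hψ0) hψ1, hψ]; rfl)
          exact ⟨-k, by push_cast; linarith⟩
        exact ⟨k1 - k2, by push_cast; linarith⟩
      rw [harith]; rwa [show b + ψ = ψ + b by ring] at this ⊢
  have hcard : t.card ≤ (rotConf t θ).card := by
    unfold rotConf
    rw [Finset.card_image_of_injOn]
    intro u hu v hv huv
    simp only at huv
    obtain ⟨k, hk⟩ := eq_of_norm2pi_eq huv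
    have : (k:ℝ) = 0 := int_mul_eq_zero (by
      rw [← hk, abs_lt]
      have h1 := (ht u hu).1; have h2 := (ht u hu).2
      have h3 := (ht v hv).1; have h4 := (ht v hv).2
      constructor <;> linarith)
    rw [this] at hk; simp at hk; linarith [hk]
  exact Finset.eq_of_subset_of_card_le hsub hcard

noncomputable def dseq (c : ℝ) (l : List ℝ) : List ℝ :=
  List.zipWith (fun u v => u - v) (l ++ [2 * π]) (c :: l)

lemma dseq_cons (c a : ℝ) (l : List ℝ) : dseq c (a :: l) = (a - c) :: dseq a l := by
  simp [dseq]

lemma dseq_lex : ∀ {u v : List ℝ}, List.Lex (· < ·) u v → u.length = v.length →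
    ∀ c, List.Lex (· < ·) (dseq c u) (dseq c v) := by
  intro u v h
  induction h with
  | nil => intro hlen; simp at hlen
  | @cons a l₁ l₂ h ih =>
      intro hlen c
      rw [dseq_cons, dseq_cons]
      exact List.Lex.cons (ih (by simpa using hlen) a)
  | @rel a₁ l₁ a₂ l₂ h =>
      intro hlen c
      rw [dseq_cons, dseq_cons]
      exact List.Lex.rel (show a₁ - c < a₂ - c by linarith)

lemma sorted_lex_wins : ∀ {u v : List ℝ}, List.Lex (· < ·) u v → u.Pairwise (· < ·) →
    v.Pairwise (· < ·) → u.length = v.length →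
    ∃ θ, θ ∈ u ∧ θ ∉ v ∧ ∀ ψ, ψ < θ → (ψ ∈ u ↔ ψ ∈ v) := by
  intro u v h
  induction h with
  | nil => intro _ _ hlen; simp at hlen
  | @cons a l₁ l₂ h ih =>
      intro hu hv hlen
      rw [List.pairwise_cons] at hu hv
      obtain ⟨θ, h1, h2, h3⟩ := ih hu.2 hv.2 (by simpa using hlen)
      have hθa : a < θ := hu.1 θ h1
      refine ⟨θ, List.mem_cons_of_mem _ h1, ?_, ?_⟩
      · intro hc
        rcases List.mem_cons.mp hc with rfl | hc
        · exact absurd hθa (lt_irrefl _)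
        · exact h2 hc
      · intro ψ hψ
        constructor
        · intro hm
          rcases List.mem_cons.mp hm with rfl | hm
          · exact List.mem_cons_self
          · exact List.mem_cons_of_mem _ ((h3 ψ hψ).mp hm)
        · intro hm
          rcases List.mem_cons.mp hm with rfl | hm
          · exact List.mem_cons_self
          · exact List.mem_cons_of_mem _ ((h3 ψ hψ).mpr hm)
  | @rel a₁ l₁ a₂ l₂ h =>
      intro hu hv _
      rw [List.pairwise_cons] at hu hv
      refine ⟨a₁, List.mem_cons_self, ?_, ?_⟩
      · intro hc
        rcases List.mem_cons.mp hc with rfl | hc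
        · exact absurd h (lt_irrefl _)
        · exact absurd (hv.1 _ hc) (by push_neg; linarith [h])
      · intro ψ hψ
        constructor
        · intro hm
          rcases List.mem_cons.mp hm with rfl | hm
          · exact absurd hψ (lt_irrefl _)
          · exact absurd (hu.1 _ hm) (by push_neg; linarith)
        · intro hm
          rcases List.mem_cons.mp hm with rfl | hm
          · exact absurd hψ (by push_neg; linarith [h])
          · exact absurd (hv.1 _ hm) (by push_neg; linarith [h])

noncomputable def sortD (t : Finset ℝ) (a : ℝ) : List ℝ := (Dset t a).sort (· ≤ ·)

lemma angleSeq_eq (t : Finset ℝ) (a : ℝ) : angleSeq t a = dseq 0 (sortD t a) := rfl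

lemma card_Dset {t : Finset ℝ} (ht : OnCircle t) {a : ℝ} (ha : a ∈ t) :
    (Dset t a).card = t.card - 1 := by
  unfold Dset
  rw [Finset.card_image_of_injOn, Finset.card_erase_of_mem ha]
  intro u hu v hv huv
  have hu' := Finset.mem_of_mem_erase hu
  have hv' := Finset.mem_of_mem_erase hv
  have h1 : norm2pi (a + cwAngle a u) = norm2pi (a + cwAngle a v) := by rw [huv]
  rw [cwAngle_self_eq, cwAngle_self_eq, norm2pi_eq_self (ht u hu').1 (ht u hu').2,
    norm2pi_eq_self (ht v hv').1 (ht v hv').2] at h1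
  exact h1

lemma lex_iff_wins {t : Finset ℝ} (ht : OnCircle t) {a b : ℝ} (ha : a ∈ t) (hb : b ∈ t) :
    ListLexLt (angleSeq t a) (angleSeq t b) ↔ Wins t a b := by
  have hlen : (sortD t a).length = (sortD t b).length := by
    unfold sortD
    rw [Finset.length_sort, Finset.length_sort, card_Dset ht ha, card_Dset ht hb]
  have hWofLex : ∀ {x y : ℝ}, x ∈ t → y ∈ t →
      List.Lex (· < ·) (sortD t x) (sortD t y) → Wins t x y := by
    intro x y hx hy hl
    obtain ⟨θ, h1, h2, h3⟩ := sorted_lex_wins hl (Finset.sortedLT_sort _).pairwise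
      (Finset.sortedLT_sort _).pairwise
      (by unfold sortD; rw [Finset.length_sort, Finset.length_sort,
            card_Dset ht hx, card_Dset ht hy])
    refine ⟨θ, ?_, ?_, ?_⟩
    · unfold sortD at h1; exact (Finset.mem_sort _).mp h1
    · intro hc; unfold sortD at h2; exact h2 ((Finset.mem_sort _).mpr hc)
    · intro ψ hψ
      have := h3 ψ hψ
      unfold sortD at this
      rw [Finset.mem_sort, Finset.mem_sort] at this
      exact this
  constructor
  · intro hlex
    rw [angleSeq_eq, angleSeq_eq] at hlex
    rcases trichotomous_of (List.Lex ((· < ·) : ℝ → ℝ → Prop)) (sortD t a) (sortD t b)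
      with h | h | h
    · exact hWofLex ha hb h
    · exfalso; rw [h] at hlex
      exact (asymm (r := List.Lex ((· < ·) : ℝ → ℝ → Prop)) hlex hlex : False)
    · exfalso
      exact (asymm (r := List.Lex ((· < ·) : ℝ → ℝ → Prop)) hlex (dseq_lex h hlen.symm 0) : False)
  · intro hw
    rcases trichotomous_of (List.Lex ((· < ·) : ℝ → ℝ → Prop)) (sortD t a) (sortD t b)
      with h | h | h
    · rw [angleSeq_eq, angleSeq_eq]
      exact dseq_lex h hlen 0
    · exfalso
      obtain ⟨θ, h1, h2, _⟩ := hw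
      have : Dset t a = Dset t b := by
        have := congrArg (fun l : List ℝ => l.toFinset) h
        simpa [sortD, Finset.sort_toFinset] using this
      exact h2 (this ▸ h1)
    · exact absurd (wins_asymm hw (hWofLex hb ha h)) (by simp)

lemma pi_lt_two_pi : π < 2*π := by nlinarith [pi_pos]

lemma cwAngle_eq_zero {a b : ℝ} (ha0 : 0 ≤ a) (ha1 : a < 2*π) (hb0 : 0 ≤ b) (hb1 : b < 2*π)
    (h : cwAngle a b = 0) : a = b := by
  have h1 : norm2pi (a + cwAngle a b) = norm2pi b := cwAngle_self_eq a b
  rw [h, add_zero, norm2pi_eq_self ha0 ha1, norm2pi_eq_self hb0 hb1] at h1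
  exact h1

lemma antip_ne_self {r : ℝ} (hr0 : 0 ≤ r) (hr1 : r < 2*π) : antip r ≠ r := by
  intro h
  unfold antip at h
  have h2 : norm2pi (r + π) = norm2pi r := by rw [h, norm2pi_eq_self hr0 hr1]
  obtain ⟨k, hk⟩ := eq_of_norm2pi_eq h2
  have hk' : π = 2*π*(k:ℝ) := by linarith
  have : (k:ℝ) = 0 := int_mul_eq_zero (by
    rw [← hk', abs_lt]
    have := pi_pos; have := pi_lt_two_pi
    constructor <;> linarith)
  rw [this] at hk'
  have := pi_pos; linarith

lemma cwAngle_antip (r : ℝ) (hr0 : 0 ≤ r) (hr1 : r < 2*π) : cwAngle r (antip r) = π := by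
  unfold cwAngle antip
  rw [show norm2pi (r + π) - r = norm2pi (r+π) + (-r) by ring, norm2pi_norm2pi_add,
    show r + π + -r = π by ring]
  exact norm2pi_eq_self (le_of_lt pi_pos) pi_lt_two_pi

/-- distance to `q` is not attained within `P` when `q ∉ P` -/
lemma cw_q_not_mem {P : Finset ℝ} (hP : OnCircle P) {x q : ℝ} (hx0 : 0 ≤ x) (hx1 : x < 2*π)
    (hq0 : 0 ≤ q) (hq1 : q < 2*π) (hq : q ∉ P) : cwAngle x q ∉ Dset P x := by
  intro h
  obtain ⟨y, hy, hcw⟩ := Finset.mem_image.mp h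
  have hy' := Finset.mem_of_mem_erase hy
  have : norm2pi (x + cwAngle x y) = norm2pi (x + cwAngle x q) := by rw [hcw]
  rw [cwAngle_self_eq, cwAngle_self_eq, norm2pi_eq_self (hP y hy').1 (hP y hy').2,
    norm2pi_eq_self hq0 hq1] at this
  exact hq (this ▸ hy')

lemma Dset_insert {P : Finset ℝ} {x q : ℝ} (hx : x ∈ P) (hxq : x ≠ q) :
    Dset (insert q P) x = insert (cwAngle x q) (Dset P x) := by
  unfold Dset
  rw [Finset.erase_insert_of_ne (Ne.symm hxq), Finset.image_insert]

/-- THE CORE LEMMA -/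
lemma core {P : Finset ℝ} (hP : OnCircle P) (hasymP : RotAsym P)
    {r : ℝ} (hr : r ∈ P) (hq : antip r ∉ P)
    (hlead : ∀ z ∈ insert (antip r) P, z ≠ r →
      ListLexLt (angleSeq (insert (antip r) P) r) (angleSeq (insert (antip r) P) z)) :
    ∀ x ∈ P, x ≠ r → ListLexLt (angleSeq P r) (angleSeq P x) := by
  set q := antip r with hqdef
  set C1 := insert q P with hC1def
  have hr0 : 0 ≤ r := (hP r hr).1
  have hr1 : r < 2*π := (hP r hr).2
  have hq0 : 0 ≤ q := norm2pi_nonneg _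
  have hq1 : q < 2*π := norm2pi_lt _
  have hC1circ : OnCircle C1 := by
    intro y hy
    rcases Finset.mem_insert.mp hy with rfl | hy
    · exact ⟨hq0, hq1⟩
    · exact hP y hy
  have hrq : r ≠ q := fun h => antip_ne_self hr0 hr1 h.symm
  have hrC1 : r ∈ C1 := Finset.mem_insert_of_mem hr
  have hDr' : Dset C1 r = insert π (Dset P r) := by
    rw [hC1def, Dset_insert hr hrq, cwAngle_antip r hr0 hr1]
  have hpi_not : π ∉ Dset P r := by
    have := cw_q_not_mem hP hr0 hr1 hq0 hq1 hq
    rwa [hqdef, cwAngle_antip r hr0 hr1] at this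
  intro x hx hxr
  have hx0 : 0 ≤ x := (hP x hx).1
  have hx1 : x < 2*π := (hP x hx).2
  have hxq : x ≠ q := fun h => hq (h ▸ hx)
  have hxC1 : x ∈ C1 := Finset.mem_insert_of_mem hx
  rcases wins_trichotomy P r x with hw | heq | hw
  · exact (lex_iff_wins hP hr hx).mpr hw
  · exact absurd hasymP (rot_of_Dset_eq hP hr hx (Ne.symm hxr) heq)
  exfalso
  obtain ⟨mm, hmmx, hmmr, hmmag⟩ := hw
  have hmm0 : 0 < mm := (Dset_pos hP hx hmmx).1
  have hmm1 : mm < 2*π := (Dset_pos hP hx hmmx).2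
  -- r beats x in C1
  have hwrx : Wins C1 r x := (lex_iff_wins hC1circ hrC1 hxC1).mp (hlead x hxC1 hxr)
  obtain ⟨M, hMr, hMx, hMag⟩ := hwrx
  have hM0 : 0 < M := (Dset_pos hC1circ hrC1 hMr).1
  have hM1 : M < 2*π := (Dset_pos hC1circ hrC1 hMr).2
  set δ := cwAngle x q with hδdef
  have hDx' : Dset C1 x = insert δ (Dset P x) := by rw [hC1def, Dset_insert hx hxq]
  have hδ_not : δ ∉ Dset P x := cw_q_not_mem hP hx0 hx1 hq0 hq1 hq
  -- M ≥ π
  have hMpi : π ≤ M := by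
    by_contra hc
    push_neg at hc
    have hM_Pr : M ∈ Dset P r := by
      rcases Finset.mem_insert.mp (hDr' ▸ hMr) with h | h
      · exact absurd h (by intro h; rw [h] at hc; exact absurd hc (lt_irrefl _))
      · exact h
    have hM_nPx : M ∉ Dset P x := fun h =>
      hMx (hDx' ▸ Finset.mem_insert_of_mem h)
    rcases lt_trichotomy M mm with h | h | h
    · exact hM_nPx ((hmmag M h).mpr hM_Pr)
    · exact hM_nPx (h ▸ hmmx)
    · have h1 : mm ∈ Dset C1 x := hDx' ▸ Finset.mem_insert_of_mem hmmx
      have h2 : mm ∈ Dset C1 r := (hMag mm h).mpr h1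
      rcases Finset.mem_insert.mp (hDr' ▸ h2) with h3 | h3
      · rw [h3] at h; linarith
      · exact hmmr h3
  -- γ facts
  set γ := cwAngle x r with hγdef
  have hγ0 : 0 < γ := cwAngle_pos hx0 hx1 hr0 hr1 (Ne.symm hxr)
  have hγ1 : γ < 2*π := norm2pi_lt _
  have hxγr : norm2pi (x + γ) = r := by
    rw [hγdef, cwAngle_self_eq, norm2pi_eq_self hr0 hr1]
  have hγpi : γ ≠ π := by
    intro h
    apply hxq
    have : q = norm2pi (x + γ + π) := by
      rw [hqdef]
      unfold antip
      rw [← hxγr, norm2pi_norm2pi_add]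
    rw [h] at this
    rw [show x + π + π = x + 2*π*(1:ℤ) by push_cast; ring, norm2pi_add_int,
      norm2pi_eq_self hx0 hx1] at this
    exact this.symm
  have hδγ : δ = norm2pi (γ + π) := by
    rw [hδdef]
    unfold cwAngle
    have : q = norm2pi (x + γ + π) := by
      rw [hqdef]; unfold antip; rw [← hxγr, norm2pi_norm2pi_add]
    rw [this, show norm2pi (x + γ + π) - x = norm2pi (x + γ + π) + (-x) by ring,
      norm2pi_norm2pi_add, show x + γ + π + -x = γ + π by ring]
  -- γ < π
  have hγltpi : γ < π := by
    rcases lt_or_gt_of_ne hγpi with h | h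
    · exact h
    exfalso
    have hδval : δ = γ - π := by
      rw [hδγ, show γ + π = (γ - π) + 2*π*(1:ℤ) by push_cast; ring, norm2pi_add_int]
      exact norm2pi_eq_self (by linarith) (by linarith [pi_lt_two_pi, pi_pos])
    have hδ0 : 0 < δ := by rw [hδval]; linarith
    have hδpi : δ < π := by rw [hδval]; linarith [pi_lt_two_pi]
    have hδ_C1x : δ ∈ Dset C1 x := hDx' ▸ Finset.mem_insert_self δ _
    have hδ_C1r : δ ∈ Dset C1 r := (hMag δ (lt_of_lt_of_le hδpi hMpi)).mpr hδ_C1x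
    have hδ_Pr : δ ∈ Dset P r := by
      rcases Finset.mem_insert.mp (hDr' ▸ hδ_C1r) with h' | h'
      · exact absurd h' (ne_of_lt hδpi)
      · exact h'
    rcases lt_trichotomy δ mm with h' | h' | h'
    · exact hδ_not ((hmmag δ h').mpr hδ_Pr)
    · exact hmmr (h' ▸ hδ_Pr)
    · have h1 : mm ∈ Dset C1 x := hDx' ▸ Finset.mem_insert_of_mem hmmx
      have h2 : mm ∈ Dset C1 r := (hMag mm (lt_of_lt_of_le (h'.trans hδpi) hMpi)).mpr h1
      rcases Finset.mem_insert.mp (hDr' ▸ h2) with h3 | h3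
      · exact absurd h3 (ne_of_lt (h'.trans hδpi))
      · exact hmmr h3
  -- the clone point z beats r in C1
  have hγM : γ < M := lt_of_lt_of_le hγltpi hMpi
  have hγ_Px : γ ∈ Dset P x :=
    Finset.mem_image.mpr ⟨r, Finset.mem_erase.mpr ⟨Ne.symm hxr, hr⟩, rfl⟩
  have hγ_C1x : γ ∈ Dset C1 x := hDx' ▸ Finset.mem_insert_of_mem hγ_Px
  have hγ_C1r : γ ∈ Dset C1 r := (hMag γ hγM).mpr hγ_C1x
  set z := norm2pi (r + γ) with hzdef
  have hzC1 : z ∈ C1 := (mem_Dset_iff hC1circ hr0 hr1 hγ0 hγ1).mp hγ_C1r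
  have hz0 : 0 ≤ z := norm2pi_nonneg _
  have hz1 : z < 2*π := norm2pi_lt _
  have hzr : z ≠ r := by
    intro h
    have h2 : norm2pi (r + γ) = norm2pi (r + 0) := by
      rw [add_zero, norm2pi_eq_self hr0 hr1]; exact h
    obtain ⟨k, hk⟩ := eq_of_norm2pi_eq h2
    have hk' : γ = 2*π*(k:ℝ) := by linarith
    have : (k:ℝ) = 0 := int_mul_eq_zero (by rw [← hk', abs_lt]; constructor <;> linarith)
    rw [this] at hk'
    linarith
  have hz_shift : ∀ ψ : ℝ, norm2pi (z + ψ) = norm2pi (r + (γ + ψ)) := by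
    intro ψ
    rw [hzdef, norm2pi_norm2pi_add, show r + γ + ψ = r + (γ + ψ) by ring]
  have hr_shift : ∀ ψ : ℝ, norm2pi (r + ψ) = norm2pi (x + (γ + ψ)) := by
    intro ψ
    conv_lhs => rw [← hxγr]
    rw [norm2pi_norm2pi_add, show x + γ + ψ = x + (γ + ψ) by ring]
  have hwzr : Wins C1 z r := by
    refine ⟨M - γ, ?_, ?_, ?_⟩
    · rw [mem_Dset_iff hC1circ hz0 hz1 (by linarith) (by linarith)]
      rw [hz_shift, show γ + (M - γ) = M by ring]
      exact (mem_Dset_iff hC1circ hr0 hr1 hM0 hM1).mp hMr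
    · rw [mem_Dset_iff hC1circ hr0 hr1 (by linarith) (by linarith)]
      rw [hr_shift, show γ + (M - γ) = M by ring]
      intro hc
      exact hMx ((mem_Dset_iff hC1circ hx0 hx1 hM0 hM1).mpr hc)
    · intro ψ hψ
      by_cases hψ0 : 0 < ψ
      · have hψ1 : ψ < 2*π := by linarith
        have hγψ1 : γ + ψ < M := by linarith
        have e1 : (ψ ∈ Dset C1 z) ↔ norm2pi (r + (γ + ψ)) ∈ C1 := by
          rw [mem_Dset_iff hC1circ hz0 hz1 hψ0 hψ1, hz_shift]
        have e2 : (ψ ∈ Dset C1 r) ↔ norm2pi (x + (γ + ψ)) ∈ C1 := by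
          rw [mem_Dset_iff hC1circ hr0 hr1 hψ0 hψ1, hr_shift]
        have e3 := hMag (γ + ψ) hγψ1
        rw [mem_Dset_iff hC1circ hr0 hr1 (by linarith) (by linarith : γ + ψ < 2*π),
            mem_Dset_iff hC1circ hx0 hx1 (by linarith) (by linarith)] at e3
        exact e1.trans (e3.trans e2.symm)
      · push_neg at hψ0
        constructor
        · intro hm; exact absurd (Dset_pos hC1circ hzC1 hm).1 (not_lt.mpr (by linarith))
        · intro hm; exact absurd (Dset_pos hC1circ hrC1 hm).1 (not_lt.mpr (by linarith))
  exact wins_asymm hwzr ((lex_iff_wins hC1circ hrC1 hzC1).mp (hlead z hzC1 hzr))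


/-- a confused leader is the true leader in `C₀(r)` (antipodal empty)
and not in `C₁(r)` (antipodal occupied). -/
theorem confused_leader_true_in_C0
    (s : Finset ℝ) (hcirc : OnCircle s) (hasym : RotAsym s)
    (r : ℝ) (hr : ConfusedLeader s r) :
    IsTrueLeader (confC0 s r) r ∧ ¬ IsTrueLeader (confC1 s r) r := by
  obtain ⟨hrs, hA0, hA1, hxor⟩ := hr
  rcases hxor with ⟨h0, h1⟩ | ⟨h1, h0⟩
  · exact ⟨h0, h1⟩
  · exfalso
    apply h0
    have hP : OnCircle (confC0 s r) := fun y hy => hcirc y (Finset.mem_of_mem_erase hy)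
    have hrq : r ≠ antip r := fun h => antip_ne_self (hcirc r hrs).1 (hcirc r hrs).2 h.symm
    have hrP : r ∈ confC0 s r := Finset.mem_erase.mpr ⟨hrq, hrs⟩
    have hqP : antip r ∉ confC0 s r := Finset.notMem_erase _ _
    have hins : insert (antip r) (confC0 s r) = confC1 s r := by
      unfold confC0 confC1
      ext y
      simp only [Finset.mem_insert, Finset.mem_erase]
      constructor
      · rintro (rfl | ⟨h1, h2⟩)
        · exact Or.inl rfl
        · exact Or.inr h2
      · rintro (rfl | hy)
        · exact Or.inl rfl
        · by_cases hya : y = antip r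
          · exact Or.inl hya
          · exact Or.inr ⟨hya, hy⟩
    refine ⟨hrP, ?_⟩
    apply core hP hA0 hrP hqP
    rw [hins]
    exact h1.2
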